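/- arXiv:1803.10176 — 4 statements merged into one kernel-verified Lean document; each statement's English description precedes it below -/
import Mathlib

section
/- Let μ be a Borel measure on U := ℝ_+^d \ {0}, let s > 0, and let λ ∈ (s/2, s). If ∫_U ‖z‖^{s/λ} 1_{{‖z‖≥1}} μ(dz) < ∞ and ∫_U ‖z‖² 1_{{‖z‖<1}} μ(dz) < ∞, then ∫₀^∞ ∫_U e^{−(2λ−s)u} ‖z‖² 1_{{‖z‖ < e^{λu}}} μ(dz) du = (1/(2λ−s)) [ ∫_U ‖z‖² 1_{{‖z‖<1}} μ(dz) + ∫_U ‖z‖^{s/λ} 1_{{‖z‖≥1}} μ(dz) ] < ∞. -/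
open MeasureTheory Set Real Filter
open scoped ENNReal

lemma lintegral_exp_Ioi (a : ℝ) {b : ℝ} (hb : 0 < b) :
    ∫⁻ u in Set.Ioi a, ENNReal.ofReal (Real.exp (-b * u))
      = ENNReal.ofReal (Real.exp (-b * a) / b) := by
  have hint : IntegrableOn (fun u => Real.exp (-b * u)) (Set.Ioi a) :=
    exp_neg_integrableOn_Ioi a hb
  rw [← ofReal_integral_eq_lintegral_ofReal hint
      (Filter.Eventually.of_forall fun x => (Real.exp_pos _).le)]
  congr 1
  have hderiv : ∀ x ∈ Set.Ici a,
      HasDerivAt (fun u => -(Real.exp (-b * u) / b)) (Real.exp (-b * x)) x := by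
    intro x _
    have h1 : HasDerivAt (fun u : ℝ => -b * u) (-b) x := by
      simpa using (hasDerivAt_id x).const_mul (-b)
    have h2 := ((h1.exp.div_const b).neg)
    exact h2.congr_deriv (by rw [mul_neg, neg_div, neg_neg, mul_div_assoc, div_self hb.ne', mul_one])
  have htend : Filter.Tendsto (fun u => -(Real.exp (-b * u) / b)) Filter.atTop (nhds 0) := by
    have h0 : Filter.Tendsto (fun u : ℝ => Real.exp (-(b * u))) Filter.atTop (nhds 0) :=
      Real.tendsto_exp_neg_atTop_nhds_zero.comp (Filter.tendsto_id.const_mul_atTop hb)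
    have := ((h0.div_const b).neg)
    simpa [neg_mul] using this
  rw [integral_Ioi_of_hasDerivAt_of_tendsto' hderiv hint htend]
  field_simp
  ring

/-- For `λ ∈ (s/2, s)` with `s > 0`, under the moment conditions
`∫ ‖z‖^{s/λ} 1_{‖z‖≥1} μ(dz) < ∞` and `∫ ‖z‖² 1_{‖z‖<1} μ(dz) < ∞`,
`∫₀^∞ ∫ e^{-(2λ-s)u} ‖z‖² 1_{‖z‖<e^{λu}} μ(dz) du
  = (1/(2λ-s)) [∫ ‖z‖² 1_{‖z‖<1} μ(dz) + ∫ ‖z‖^{s/λ} 1_{‖z‖≥1} μ(dz)] < ∞`. -/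
theorem stmt8 {d : ℕ} (μ : Measure (EuclideanSpace ℝ (Fin d)))
    (hsupp : μ {z : EuclideanSpace ℝ (Fin d) | ¬ ((∀ i, 0 ≤ z i) ∧ z ≠ 0)} = 0)
    (s lam : ℝ) (hs : 0 < s) (hlam : lam ∈ Set.Ioo (s / 2) s)
    (h1 : ∫⁻ z, ENNReal.ofReal (if 1 ≤ ‖z‖ then ‖z‖ ^ (s / lam) else 0) ∂μ < ⊤)
    (h2 : ∫⁻ z, ENNReal.ofReal (if ‖z‖ < 1 then ‖z‖ ^ 2 else 0) ∂μ < ⊤) :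
    (∫⁻ u in Set.Ioi (0 : ℝ), ∫⁻ z, ENNReal.ofReal
        (if ‖z‖ < Real.exp (lam * u) then Real.exp (-(2 * lam - s) * u) * ‖z‖ ^ 2 else 0) ∂μ)
      = ENNReal.ofReal (1 / (2 * lam - s)) *
        ((∫⁻ z, ENNReal.ofReal (if ‖z‖ < 1 then ‖z‖ ^ 2 else 0) ∂μ)
          + ∫⁻ z, ENNReal.ofReal (if 1 ≤ ‖z‖ then ‖z‖ ^ (s / lam) else 0) ∂μ) ∧
    (∫⁻ u in Set.Ioi (0 : ℝ), ∫⁻ z, ENNReal.ofReal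
        (if ‖z‖ < Real.exp (lam * u) then Real.exp (-(2 * lam - s) * u) * ‖z‖ ^ 2 else 0) ∂μ)
      < ⊤ := by
  obtain ⟨hl1, hl2⟩ := hlam
  have hlam0 : 0 < lam := lt_trans (by positivity) hl1
  have hc0 : 0 < 2 * lam - s := by linarith
  -- μ gives no mass to 0
  have hμ0 : μ {z : EuclideanSpace ℝ (Fin d) | z = 0} = 0 := by
    refine measure_mono_null ?_ hsupp
    intro z hz
    simp only [Set.mem_setOf_eq] at hz ⊢
    intro h; exact h.2 hz
  -- measurability of the two basic integrands
  have mf2 : Measurable fun z : EuclideanSpace ℝ (Fin d) =>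
      ENNReal.ofReal (if ‖z‖ < 1 then ‖z‖ ^ 2 else 0) := by
    apply ENNReal.measurable_ofReal.comp
    exact Measurable.ite (measurableSet_lt measurable_norm measurable_const)
      (measurable_norm.pow measurable_const) measurable_const
  have mf1 : Measurable fun z : EuclideanSpace ℝ (Fin d) =>
      ENNReal.ofReal (if 1 ≤ ‖z‖ then ‖z‖ ^ (s / lam) else 0) := by
    apply ENNReal.measurable_ofReal.comp
    apply Measurable.ite (measurableSet_le measurable_const measurable_norm) ?_ measurable_const
    fun_prop
  -- finiteness of measure of {1 ≤ ‖z‖}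
  have hfin1 : μ {z : EuclideanSpace ℝ (Fin d) | 1 ≤ ‖z‖} < ⊤ := by
    have hsub : {z : EuclideanSpace ℝ (Fin d) | 1 ≤ ‖z‖} ⊆
        {z | (1 : ℝ≥0∞) ≤ ENNReal.ofReal (if 1 ≤ ‖z‖ then ‖z‖ ^ (s / lam) else 0)} := by
      intro z hz
      simp only [Set.mem_setOf_eq] at hz ⊢
      rw [if_pos hz]
      have : (1:ℝ) ≤ ‖z‖ ^ (s / lam) := Real.one_le_rpow hz (by positivity)
      simpa using ENNReal.ofReal_le_ofReal this
    calc μ _ ≤ μ _ := measure_mono hsub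
      _ ≤ _ / 1 := meas_ge_le_lintegral_div mf1.aemeasurable one_ne_zero ENNReal.one_ne_top
      _ < ⊤ := by simpa using h1
  -- finiteness of measure of annuli
  have hfinn : ∀ n : ℕ, μ {z : EuclideanSpace ℝ (Fin d) | 1 / (n + 1 : ℝ) ≤ ‖z‖} < ⊤ := by
    intro n
    have hε : (0:ℝ) < (1 / (n + 1 : ℝ)) ^ 2 := by positivity
    have hsub : {z : EuclideanSpace ℝ (Fin d) | 1 / (n + 1 : ℝ) ≤ ‖z‖} ⊆
        {z | ENNReal.ofReal ((1 / (n + 1 : ℝ)) ^ 2)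
            ≤ ENNReal.ofReal (if ‖z‖ < 1 then ‖z‖ ^ 2 else 0)} ∪
        {z | 1 ≤ ‖z‖} := by
      intro z hz
      simp only [Set.mem_setOf_eq] at hz
      rcases lt_or_ge ‖z‖ 1 with h | h
      · left
        simp only [Set.mem_setOf_eq, if_pos h]
        apply ENNReal.ofReal_le_ofReal
        exact pow_le_pow_left₀ (by positivity) hz 2
      · right; exact h
    calc μ _ ≤ μ _ := measure_mono hsub
      _ ≤ μ {z | ENNReal.ofReal ((1 / (n + 1 : ℝ)) ^ 2)
            ≤ ENNReal.ofReal (if ‖z‖ < 1 then ‖z‖ ^ 2 else 0)} + μ {z | 1 ≤ ‖z‖} :=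
          measure_union_le _ _
      _ < ⊤ := by
          refine ENNReal.add_lt_top.2 ⟨?_, hfin1⟩
          calc μ _ ≤ _ := meas_ge_le_lintegral_div mf2.aemeasurable
                (ENNReal.ofReal_pos.2 hε).ne' ENNReal.ofReal_ne_top
            _ < ⊤ := ENNReal.div_lt_top h2.ne (ENNReal.ofReal_pos.2 hε).ne'
  -- μ is sigma-finite
  haveI : SigmaFinite μ := by
    rw [sigmaFinite_iff]
    refine ⟨⟨fun n => {z | z = 0} ∪ {z | 1 / (n + 1 : ℝ) ≤ ‖z‖}, fun n => trivial, fun n => ?_, ?_⟩⟩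
    · calc μ _ ≤ μ {z | z = 0} + μ {z | 1 / (n + 1 : ℝ) ≤ ‖z‖} := measure_union_le _ _
        _ < ⊤ := by rw [hμ0]; simpa using hfinn n
    · ext z
      simp only [Set.mem_iUnion, Set.mem_union, Set.mem_setOf_eq, Set.mem_univ, iff_true]
      rcases eq_or_ne z 0 with h | h
      · exact ⟨0, Or.inl h⟩
      · have hz : 0 < ‖z‖ := norm_pos_iff.2 h
        obtain ⟨n, hn⟩ := exists_nat_one_div_lt hz
        exact ⟨n, Or.inr hn.le⟩
  -- measurability of the double integrand
  have hmeas : Measurable (Function.uncurry fun (u : ℝ) (z : EuclideanSpace ℝ (Fin d)) =>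
      ENNReal.ofReal (if ‖z‖ < Real.exp (lam * u)
        then Real.exp (-(2 * lam - s) * u) * ‖z‖ ^ 2 else 0)) := by
    apply ENNReal.measurable_ofReal.comp
    exact Measurable.ite
      (measurableSet_lt (measurable_norm.comp measurable_snd)
        ((measurable_fst.const_mul lam).exp))
      (((measurable_fst.const_mul (-(2 * lam - s))).exp).mul
        ((measurable_norm.comp measurable_snd).pow measurable_const))
      measurable_const
  -- swap the integrals
  have hswap : (∫⁻ u in Set.Ioi (0 : ℝ), ∫⁻ z, ENNReal.ofReal
        (if ‖z‖ < Real.exp (lam * u) then Real.exp (-(2 * lam - s) * u) * ‖z‖ ^ 2 else 0) ∂μ)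
      = ∫⁻ z, (∫⁻ u in Set.Ioi (0 : ℝ), ENNReal.ofReal
        (if ‖z‖ < Real.exp (lam * u) then Real.exp (-(2 * lam - s) * u) * ‖z‖ ^ 2 else 0)) ∂μ :=
    lintegral_lintegral_swap hmeas.aemeasurable
  -- compute the inner integral for each z
  have hinner : ∀ z : EuclideanSpace ℝ (Fin d),
      (∫⁻ u in Set.Ioi (0 : ℝ), ENNReal.ofReal
        (if ‖z‖ < Real.exp (lam * u) then Real.exp (-(2 * lam - s) * u) * ‖z‖ ^ 2 else 0))
      = ENNReal.ofReal (1 / (2 * lam - s)) *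
        (ENNReal.ofReal (if ‖z‖ < 1 then ‖z‖ ^ 2 else 0)
          + ENNReal.ofReal (if 1 ≤ ‖z‖ then ‖z‖ ^ (s / lam) else 0)) := by
    intro z
    rcases lt_or_ge ‖z‖ 1 with hz | hz
    · have heq : ∀ u ∈ Set.Ioi (0:ℝ), ENNReal.ofReal
          (if ‖z‖ < Real.exp (lam * u) then Real.exp (-(2 * lam - s) * u) * ‖z‖ ^ 2 else 0)
          = ENNReal.ofReal (Real.exp (-(2 * lam - s) * u)) * ENNReal.ofReal (‖z‖ ^ 2) := by
        intro u hu
        rw [if_pos, ENNReal.ofReal_mul (Real.exp_pos _).le]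
        exact hz.trans_le (Real.one_le_exp (mul_nonneg hlam0.le (le_of_lt hu)))
      rw [setLIntegral_congr_fun measurableSet_Ioi heq,
        lintegral_mul_const' _ _ ENNReal.ofReal_ne_top, lintegral_exp_Ioi 0 hc0]
      rw [if_pos hz, if_neg (not_le.2 hz)]
      simp [mul_comm]
    · set a := Real.log ‖z‖ / lam with ha
      have hz0 : (0:ℝ) < ‖z‖ := lt_of_lt_of_le one_pos hz
      have ha0 : 0 ≤ a := div_nonneg (Real.log_nonneg hz) hlam0.le
      have hcond : ∀ u : ℝ, (‖z‖ < Real.exp (lam * u)) ↔ a < u := by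
        intro u
        rw [← Real.log_lt_iff_lt_exp hz0, ha, div_lt_iff₀ hlam0, mul_comm]
      have heq : ∀ u ∈ Set.Ioi (0:ℝ), ENNReal.ofReal
          (if ‖z‖ < Real.exp (lam * u) then Real.exp (-(2 * lam - s) * u) * ‖z‖ ^ 2 else 0)
          = (Set.Ioi a).indicator
              (fun u => ENNReal.ofReal (Real.exp (-(2 * lam - s) * u)) * ENNReal.ofReal (‖z‖ ^ 2)) u := by
        intro u hu
        rcases lt_or_ge a u with h | h
        · rw [if_pos ((hcond u).2 h), Set.indicator_of_mem (Set.mem_Ioi.mpr h),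
            ENNReal.ofReal_mul (Real.exp_pos _).le]
        · rw [if_neg (fun hco => absurd ((hcond u).1 hco) (not_lt.2 h)),
            Set.indicator_of_notMem (by simpa using h)]
          simp
      rw [setLIntegral_congr_fun measurableSet_Ioi heq,
        lintegral_indicator measurableSet_Ioi, Measure.restrict_restrict measurableSet_Ioi]
      have hint : Set.Ioi a ∩ Set.Ioi (0:ℝ) = Set.Ioi a := by
        rw [Set.Ioi_inter_Ioi, max_eq_left ha0]
      rw [hint, lintegral_mul_const' _ _ ENNReal.ofReal_ne_top, lintegral_exp_Ioi a hc0]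
      rw [if_neg (not_lt.2 hz), if_pos hz]
      rw [ENNReal.ofReal_zero, zero_add,
        ← ENNReal.ofReal_mul (by positivity), ← ENNReal.ofReal_mul (by positivity)]
      congr 1
      have hexp : Real.exp (-(2 * lam - s) * a) = ‖z‖ ^ (-(2 * lam - s) / lam) := by
        rw [Real.rpow_def_of_pos hz0, ha]
        congr 1
        ring
      have hpow : ‖z‖ ^ (-(2 * lam - s) / lam) * ‖z‖ ^ (2 : ℕ) = ‖z‖ ^ (s / lam) := by
        rw [← Real.rpow_natCast ‖z‖ 2, ← Real.rpow_add hz0]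
        congr 1
        field_simp
        push_cast
        ring
      rw [hexp, ← hpow]
      ring
  rw [hswap]
  simp_rw [hinner]
  rw [lintegral_const_mul' _ _ ENNReal.ofReal_ne_top, lintegral_add_left mf2]
  refine ⟨rfl, ?_⟩
  exact ENNReal.mul_lt_top ENNReal.ofReal_lt_top (ENNReal.add_lt_top.2 ⟨h2, h1⟩)
end

section
/- In the setting of the previous martingale: suppose additionally that s > 0, u ∈ ℝ_{++}^d satisfies uᵀB = s·uᵀ, β ∈ ℝ_+^d, and X_t takes values in ℝ_+^d. Then (e^{−st} ⟨u, X_t⟩)_{t≥0} is a nonnegative submartingale with sup_{t≥0} E(e^{−st}⟨u, X_t⟩) ≤ ‖u‖ E‖X₀‖ + ⟨u, β⟩/s; in particular, for all t ≥ 0, e^{−st}⟨u, X_t⟩ = uᵀ M_t + ⟨u, β⟩ ∫₀^t e^{−sv} dv where M_t := e^{−tB}X_t − ∫₀^t e^{−vB}β dv. -/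
open MeasureTheory NNReal Matrix

theorem aux_exp_mulVec_eigen {d : ℕ} (M : Matrix (Fin d) (Fin d) ℝ) (c : ℝ) (u : Fin d → ℝ)
    (h : M.mulVec u = c • u) :
    (NormedSpace.exp M).mulVec u = Real.exp c • u := by
  letI : NormedRing (Matrix (Fin d) (Fin d) ℝ) := Matrix.linftyOpNormedRing
  letI : NormedAlgebra ℝ (Matrix (Fin d) (Fin d) ℝ) := Matrix.linftyOpNormedAlgebra
  have hpow : ∀ n : ℕ, (M ^ n).mulVec u = c ^ n • u := by
    intro n
    induction n with
    | zero => simp [Matrix.one_mulVec]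
    | succ n ih =>
      rw [pow_succ, ← Matrix.mulVec_mulVec, h, Matrix.mulVec_smul, ih, smul_smul, pow_succ,
        mul_comm]
  let L : Matrix (Fin d) (Fin d) ℝ →ₗ[ℝ] (Fin d → ℝ) :=
    { toFun := fun A => A.mulVec u
      map_add' := fun A B => Matrix.add_mulVec A B u
      map_smul' := fun r A => Matrix.smul_mulVec r A u }
  let Lc : Matrix (Fin d) (Fin d) ℝ →L[ℝ] (Fin d → ℝ) := ⟨L, L.continuous_of_finiteDimensional⟩
  have hsum : Summable fun n : ℕ => ((n.factorial : ℝ))⁻¹ • M ^ n :=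
    NormedSpace.expSeries_summable' M
  have hc : Summable fun n : ℕ => ((n.factorial : ℝ))⁻¹ * c ^ n := by
    simpa [div_eq_inv_mul] using Real.summable_pow_div_factorial c
  have key : (NormedSpace.exp M).mulVec u = Lc (∑' n : ℕ, ((n.factorial : ℝ))⁻¹ • M ^ n) := by
    rw [NormedSpace.exp_eq_tsum (𝕂 := ℝ)]; rfl
  rw [key, Lc.map_tsum hsum]
  have : ∀ n : ℕ, Lc (((n.factorial : ℝ))⁻¹ • M ^ n) = (((n.factorial : ℝ))⁻¹ * c ^ n) • u := by
    intro n
    show ((((n.factorial : ℝ))⁻¹ • M ^ n)).mulVec u = _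
    rw [Matrix.smul_mulVec, hpow, smul_smul]
  simp_rw [this]
  rw [hc.tsum_smul_const]
  congr 1
  rw [Real.exp_eq_exp_ℝ, NormedSpace.exp_eq_tsum (𝕂 := ℝ)]
  simp [smul_eq_mul]

theorem aux_condexp_clm {α E F : Type*} {m m0 : MeasurableSpace α} {μ : Measure α}
    [NormedAddCommGroup E] [NormedSpace ℝ E] [CompleteSpace E]
    [NormedAddCommGroup F] [NormedSpace ℝ F] [CompleteSpace F]
    (hm : m ≤ m0) [SigmaFinite (μ.trim hm)] (L : E →L[ℝ] F) {f : α → E}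
    (hf : Integrable f μ) :
    μ[fun ω => L (f ω) | m] =ᵐ[μ] fun ω => L ((μ[f|m]) ω) := by
  symm
  refine ae_eq_condExp_of_forall_setIntegral_eq hm (L.integrable_comp hf)
    (fun s hs hμs => (L.integrable_comp integrable_condExp).integrableOn)
    (fun s hs hμs => ?_) ?_
  · rw [L.integral_comp_comm integrable_condExp.integrableOn,
      L.integral_comp_comm hf.integrableOn, setIntegral_condExp hm hf hs]
  · exact (L.continuous.comp_stronglyMeasurable stronglyMeasurable_condExp).aestronglyMeasurable

/-- In the setting of the martingale `M_t = e^{-tB}X_t - ∫₀^t e^{-vB}β dv`: if moreover `s > 0`,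
`u` is a strictly positive left eigenvector of `B` with eigenvalue `s`, `β ≥ 0` and `X_t ≥ 0`,
then `(e^{-st}⟨u, X_t⟩)_t` is a nonnegative submartingale whose expectations are bounded by
`‖u‖E‖X₀‖ + ⟨u,β⟩/s` (Euclidean norms), and
`e^{-st}⟨u, X_t⟩ = uᵀM_t + ⟨u,β⟩∫₀^t e^{-sv} dv` pointwise. -/
theorem stmt11 {d : ℕ} {Ω : Type*} {m0 : MeasurableSpace Ω}
    (P : Measure Ω) [IsProbabilityMeasure P] (ℱ : Filtration ℝ≥0 m0)
    (B : Matrix (Fin d) (Fin d) ℝ) (β : Fin d → ℝ)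
    (X : ℝ≥0 → Ω → (Fin d → ℝ))
    (hadapted : Adapted ℱ X)
    (hint : ∀ t, Integrable (X t) P)
    (hcond : ∀ v t : ℝ≥0, v ≤ t →
      P[X t | ℱ v] =ᵐ[P] fun ω =>
        (NormedSpace.exp ((((t : ℝ) - (v : ℝ))) • B)).mulVec (X v ω)
          + ∫ w in (0:ℝ)..((t : ℝ) - (v : ℝ)), (NormedSpace.exp (w • B)).mulVec β)
    (s : ℝ) (hs : 0 < s) (u : Fin d → ℝ) (hu : ∀ i, 0 < u i)
    (hleft : Matrix.vecMul u B = s • u)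
    (hβ : ∀ i, 0 ≤ β i) (hX : ∀ t ω i, 0 ≤ X t ω i) :
    Submartingale (fun (t : ℝ≥0) (ω : Ω) => Real.exp (-s * (t : ℝ)) * (u ⬝ᵥ X t ω)) ℱ P ∧
    (∀ (t : ℝ≥0) (ω : Ω), 0 ≤ Real.exp (-s * (t : ℝ)) * (u ⬝ᵥ X t ω)) ∧
    (∀ t : ℝ≥0, ∫ ω, Real.exp (-s * (t : ℝ)) * (u ⬝ᵥ X t ω) ∂P
      ≤ Real.sqrt (∑ i, (u i) ^ 2) * (∫ ω, Real.sqrt (∑ i, (X 0 ω i) ^ 2) ∂P)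
        + (u ⬝ᵥ β) / s) ∧
    (∀ t : ℝ≥0, ∀ ω, Real.exp (-s * (t : ℝ)) * (u ⬝ᵥ X t ω)
      = u ⬝ᵥ ((NormedSpace.exp ((-(t : ℝ)) • B)).mulVec (X t ω)
            - ∫ v in (0:ℝ)..(t : ℝ), (NormedSpace.exp ((-v) • B)).mulVec β)
        + (u ⬝ᵥ β) * ∫ v in (0:ℝ)..(t : ℝ), Real.exp (-s * v)) := by
  classical
  -- the dot-product continuous linear map
  let L : (Fin d → ℝ) →L[ℝ] ℝ :=
    LinearMap.toContinuousLinearMap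
      { toFun := fun x => u ⬝ᵥ x
        map_add' := fun x y => dotProduct_add u x y
        map_smul' := fun c x => dotProduct_smul c u x }
  have hL : ∀ x : Fin d → ℝ, L x = u ⬝ᵥ x := fun _ => rfl
  have hb : 0 ≤ u ⬝ᵥ β := Finset.sum_nonneg fun i _ => mul_nonneg (hu i).le (hβ i)
  -- eigenvector identity for exponentials
  have hdot : ∀ (w : ℝ) (x : Fin d → ℝ),
      u ⬝ᵥ (NormedSpace.exp (w • B)).mulVec x = Real.exp (s * w) * (u ⬝ᵥ x) := by
    intro w x
    have h1 : ((w • B)ᵀ).mulVec u = (s * w) • u := by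
      rw [Matrix.transpose_smul, Matrix.smul_mulVec, Matrix.mulVec_transpose, hleft,
        smul_smul, mul_comm]
    have h2 := aux_exp_mulVec_eigen _ _ _ h1
    rw [Matrix.exp_transpose] at h2
    rw [Matrix.dotProduct_mulVec, ← Matrix.mulVec_transpose, h2, smul_dotProduct,
      smul_eq_mul]
  -- continuity facts
  have hexpc : Continuous fun A : Matrix (Fin d) (Fin d) ℝ => NormedSpace.exp A := by
    letI : NormedRing (Matrix (Fin d) (Fin d) ℝ) := Matrix.linftyOpNormedRing
    letI : NormedAlgebra ℝ (Matrix (Fin d) (Fin d) ℝ) := Matrix.linftyOpNormedAlgebra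
    letI : NormedAlgebra ℚ (Matrix (Fin d) (Fin d) ℝ) := NormedAlgebra.restrictScalars ℚ ℝ _
    exact NormedSpace.exp_continuous
  have hmulc : Continuous fun A : Matrix (Fin d) (Fin d) ℝ => A.mulVec β := by
    let L2 : Matrix (Fin d) (Fin d) ℝ →ₗ[ℝ] (Fin d → ℝ) :=
      { toFun := fun A : Matrix (Fin d) (Fin d) ℝ => A.mulVec β
        map_add' := fun A B' => Matrix.add_mulVec A B' β
        map_smul' := fun r A => Matrix.smul_mulVec r A β }
    exact L2.continuous_of_finiteDimensional
  have hcont2 : ∀ f : ℝ → ℝ, Continuous f →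
      Continuous fun w : ℝ => (NormedSpace.exp (f w • B)).mulVec β := fun f hf =>
    hmulc.comp (hexpc.comp (hf.smul continuous_const))
  -- dot product of integrals
  have hdint : ∀ (r : ℝ) (f : ℝ → ℝ) (hf : Continuous f),
      u ⬝ᵥ (∫ w in (0:ℝ)..r, (NormedSpace.exp (f w • B)).mulVec β)
        = (u ⬝ᵥ β) * ∫ w in (0:ℝ)..r, Real.exp (s * f w) := by
    intro r f hf
    rw [← hL, ← L.intervalIntegral_comp_comm ((hcont2 f hf).intervalIntegrable _ _)]
    simp_rw [hL, hdot]
    rw [intervalIntegral.integral_mul_const, mul_comm]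
  have hdint1 : ∀ r : ℝ,
      u ⬝ᵥ (∫ w in (0:ℝ)..r, (NormedSpace.exp (w • B)).mulVec β)
        = (u ⬝ᵥ β) * ∫ w in (0:ℝ)..r, Real.exp (s * w) := by
    intro r
    simpa using hdint r (fun w => w) continuous_id
  have hdint2 : ∀ r : ℝ,
      u ⬝ᵥ (∫ w in (0:ℝ)..r, (NormedSpace.exp ((-w) • B)).mulVec β)
        = (u ⬝ᵥ β) * ∫ w in (0:ℝ)..r, Real.exp (-s * w) := by
    intro r
    have := hdint r (fun w => -w) (continuous_neg)
    simpa [mul_neg, neg_mul] using this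
  -- key conditional expectation formula
  have hkey : ∀ v t : ℝ≥0, v ≤ t →
      P[fun ω => u ⬝ᵥ X t ω | ℱ v] =ᵐ[P] fun ω =>
        Real.exp (s * ((t : ℝ) - v)) * (u ⬝ᵥ X v ω)
          + (u ⬝ᵥ β) * ∫ w in (0:ℝ)..((t : ℝ) - v), Real.exp (s * w) := by
    intro v t hvt
    have h1 := aux_condexp_clm (ℱ.le v) L (hint t)
    refine h1.trans ?_
    filter_upwards [hcond v t hvt] with ω hω
    rw [hL, hω, dotProduct_add, hdot, hdint1]
  -- integrability of the processes
  have hfi : ∀ t : ℝ≥0, Integrable (fun ω => u ⬝ᵥ X t ω) P := fun t =>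
    L.integrable_comp (hint t)
  -- the submartingale property
  have hsub : Submartingale (fun (t : ℝ≥0) (ω : Ω) =>
      Real.exp (-s * (t : ℝ)) * (u ⬝ᵥ X t ω)) ℱ P := by
    refine ⟨fun t => (L.continuous.comp_stronglyMeasurable (hadapted t).stronglyMeasurable).const_mul _,
      fun v t hvt => ?_, fun t => (hfi t).const_mul _⟩
    have hc1 : P[fun ω => Real.exp (-s * (t : ℝ)) * (u ⬝ᵥ X t ω)|ℱ v]
        =ᵐ[P] fun ω => Real.exp (-s * (t : ℝ)) * ((P[fun ω => u ⬝ᵥ X t ω|ℱ v]) ω) :=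
      condExp_smul (Real.exp (-s * (t : ℝ))) (fun ω => u ⬝ᵥ X t ω) _
    have hI : 0 ≤ ∫ w in (0:ℝ)..((t : ℝ) - v), Real.exp (s * w) := by
      apply intervalIntegral.integral_nonneg
      · simp only [sub_nonneg]; exact_mod_cast hvt
      · exact fun w _ => (Real.exp_pos _).le
    have hee : Real.exp (-s * (t : ℝ)) * Real.exp (s * ((t : ℝ) - v)) = Real.exp (-s * (v : ℝ)) := by
      rw [← Real.exp_add]; congr 1; ring
    filter_upwards [hc1, hkey v t hvt] with ω h1ω h2ω
    rw [h1ω, h2ω, mul_add, ← mul_assoc, hee]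
    have : 0 ≤ Real.exp (-s * (t : ℝ)) * ((u ⬝ᵥ β) * ∫ w in (0:ℝ)..((t : ℝ) - v),
        Real.exp (s * w)) := mul_nonneg (Real.exp_pos _).le (mul_nonneg hb hI)
    linarith
  -- nonnegativity
  have hpos : ∀ (t : ℝ≥0) (ω : Ω), 0 ≤ Real.exp (-s * (t : ℝ)) * (u ⬝ᵥ X t ω) := fun t ω =>
    mul_nonneg (Real.exp_pos _).le
      (Finset.sum_nonneg fun i _ => mul_nonneg (hu i).le (hX t ω i))
  refine ⟨hsub, hpos, ?_, ?_⟩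
  · -- expectation bound
    intro t
    have hE0 : ∫ ω, (u ⬝ᵥ X t ω) ∂P
        = Real.exp (s * (t : ℝ)) * ∫ ω, (u ⬝ᵥ X 0 ω) ∂P
          + (u ⬝ᵥ β) * ∫ w in (0:ℝ)..(t : ℝ), Real.exp (s * w) := by
      rw [← integral_condExp (ℱ.le 0) (μ := P) (f := fun ω => u ⬝ᵥ X t ω),
        integral_congr_ae (hkey 0 t (zero_le : (0:ℝ≥0) ≤ t))]
      simp only [NNReal.coe_zero, sub_zero]
      rw [integral_add ((hfi 0).const_mul _) (integrable_const _)]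
      rw [integral_const_mul, integral_const, probReal_univ]
      simp
    have hIcalc : ∫ w in (0:ℝ)..(t : ℝ), Real.exp (s * w)
        = s⁻¹ * (Real.exp (s * (t : ℝ)) - 1) := by
      rw [intervalIntegral.integral_comp_mul_left Real.exp hs.ne']
      rw [integral_exp]
      simp [smul_eq_mul]
    -- Cauchy-Schwarz pointwise bound
    have cauchy : ∀ x : Fin d → ℝ,
        u ⬝ᵥ x ≤ Real.sqrt (∑ i, (u i) ^ 2) * Real.sqrt (∑ i, (x i) ^ 2) := fun x =>
      Real.sum_mul_le_sqrt_mul_sqrt Finset.univ u x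
    -- integrability of the bound
    have habs : Integrable (fun ω => ∑ i, |X 0 ω i|) P :=
      integrable_finset_sum _ fun i _ =>
        ((ContinuousLinearMap.proj (R := ℝ) (φ := fun _ : Fin d => ℝ) i).integrable_comp
          (hint 0)).abs
    have hgm : AEStronglyMeasurable (fun ω => Real.sqrt (∑ i, (X 0 ω i) ^ 2)) P := by
      have : Continuous fun x : Fin d → ℝ => Real.sqrt (∑ i, (x i) ^ 2) := by
        apply Real.continuous_sqrt.comp
        exact continuous_finset_sum _ fun i _ => (continuous_apply i).pow 2
      exact this.comp_aestronglyMeasurable (hint 0).1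
    have hgint : Integrable (fun ω => Real.sqrt (∑ i, (X 0 ω i) ^ 2)) P := by
      refine habs.mono hgm (Filter.Eventually.of_forall fun ω => ?_)
      have hsnn : (0:ℝ) ≤ ∑ i, |X 0 ω i| := Finset.sum_nonneg fun i _ => abs_nonneg _
      have h1 : Real.sqrt (∑ i, (X 0 ω i) ^ 2) ≤ ∑ i, |X 0 ω i| := by
        have h2 : (∑ i, (X 0 ω i) ^ 2) ≤ (∑ i, |X 0 ω i|) ^ 2 := by
          calc (∑ i, (X 0 ω i) ^ 2) = ∑ i, |X 0 ω i| ^ 2 := by simp [sq_abs]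
          _ ≤ (∑ i, |X 0 ω i|) ^ 2 :=
            Finset.sum_sq_le_sq_sum_of_nonneg fun i _ => abs_nonneg _
        calc Real.sqrt (∑ i, (X 0 ω i) ^ 2) ≤ Real.sqrt ((∑ i, |X 0 ω i|) ^ 2) :=
              Real.sqrt_le_sqrt h2
        _ = ∑ i, |X 0 ω i| := Real.sqrt_sq hsnn
      rw [Real.norm_eq_abs, Real.norm_eq_abs, abs_of_nonneg (Real.sqrt_nonneg _),
        abs_of_nonneg hsnn]
      exact h1
    have hA : ∫ ω, (u ⬝ᵥ X 0 ω) ∂P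
        ≤ Real.sqrt (∑ i, (u i) ^ 2) * ∫ ω, Real.sqrt (∑ i, (X 0 ω i) ^ 2) ∂P := by
      rw [← integral_const_mul]
      exact integral_mono (hfi 0) (hgint.const_mul _) fun ω => cauchy (X 0 ω)
    have hexple : Real.exp (-s * (t : ℝ)) * Real.exp (s * (t : ℝ)) = 1 := by
      rw [← Real.exp_add]; simp
    have h0 : (0:ℝ) < Real.exp (-s * (t : ℝ)) := Real.exp_pos _
    rw [integral_const_mul, hE0, hIcalc, mul_add, ← mul_assoc, hexple, one_mul]
    have key2 : Real.exp (-s * (t : ℝ)) * ((u ⬝ᵥ β) * (s⁻¹ * (Real.exp (s * (t : ℝ)) - 1)))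
        ≤ (u ⬝ᵥ β) / s := by
      rw [div_eq_mul_inv]
      nlinarith [mul_nonneg hb (inv_nonneg.2 hs.le), h0.le, hexple,
        mul_nonneg (mul_nonneg hb (inv_nonneg.2 hs.le)) h0.le]
    linarith [hA, key2]
  · -- pointwise identity
    intro t ω
    rw [dotProduct_sub, hdint2, hdot]
    have : s * (-(t : ℝ)) = -s * (t : ℝ) := by ring
    rw [this]
    ring
end

section
/- Assume ‖e^{−st}e^{tB} − ũuᵀ‖ ≤ C₁ e^{−C₂t} for all t ≥ 0 with s, C₁, C₂ > 0. Then e^{−st} ∫₀^t (t − w) e^{wB} dw → ũuᵀ / s² as t → ∞ (in matrix norm). -/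
open scoped Matrix.Norms.L2Operator
open Filter Matrix

lemma aux_integral14 (s : ℝ) (hs : 0 < s) (t : ℝ) :
    ∫ w in (0:ℝ)..t, (t - w) * Real.exp (s * w)
      = Real.exp (s * t) / s ^ 2 - (t / s + 1 / s ^ 2) := by
  have h : ∀ w ∈ Set.uIcc (0:ℝ) t,
      HasDerivAt (fun w => Real.exp (s * w) * ((t - w) / s + 1 / s ^ 2))
        ((t - w) * Real.exp (s * w)) w := by
    intro w _
    have h1 : HasDerivAt (fun w => Real.exp (s * w)) (s * Real.exp (s * w)) w := by
      exact ((hasDerivAt_id w).const_mul s).exp.congr_deriv (by simp only [id, mul_one]; ring)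
    have h2 : HasDerivAt (fun w : ℝ => (t - w) / s + 1 / s ^ 2) (-(1 / s)) w := by
      have : HasDerivAt (fun w : ℝ => (t - w) / s + 1 / s ^ 2) ((0 - 1) / s) w :=
        (((hasDerivAt_const w t).sub (hasDerivAt_id w)).div_const s).add_const _
      convert this using 1; ring
    have := h1.mul h2
    refine this.congr_deriv ?_
    have hs' : s ≠ 0 := hs.ne'
    have e1 : s * (1 / s ^ 2) = 1 / s := by
      rw [one_div, one_div, pow_two, mul_inv, ← mul_assoc, mul_inv_cancel₀ hs', one_mul]
    have e2 : s * ((t - w) / s) = t - w := by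
      rw [mul_div_assoc']; exact mul_div_cancel_left₀ _ hs'
    linear_combination Real.exp (s * w) * e2 + Real.exp (s * w) * e1
  rw [intervalIntegral.integral_eq_sub_of_hasDerivAt h
    (by apply Continuous.intervalIntegrable; continuity)]
  field_simp
  simp

lemma aux_scalar14 (s : ℝ) (hs : 0 < s) :
    Tendsto (fun t : ℝ => Real.exp (-s * t) * ∫ w in (0:ℝ)..t, (t - w) * Real.exp (s * w))
      atTop (nhds (1 / s ^ 2)) := by
  have key : ∀ t : ℝ, Real.exp (-s * t) * ∫ w in (0:ℝ)..t, (t - w) * Real.exp (s * w)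
      = 1 / s ^ 2 - (t / s + 1 / s ^ 2) * Real.exp (-s * t) := by
    intro t
    rw [aux_integral14 s hs t]
    have h1 : Real.exp (-s * t) * Real.exp (s * t) = 1 := by
      rw [← Real.exp_add]; ring_nf; exact Real.exp_zero
    linear_combination h1 / s ^ 2
  simp only [key]
  have hb : Tendsto (fun t : ℝ => Real.exp (-s * t)) atTop (nhds 0) := by
    have h1 : Tendsto (fun t : ℝ => -s * t) atTop atBot := by
      have := tendsto_neg_atTop_atBot.comp
        (tendsto_id.const_mul_atTop hs : Tendsto (fun t : ℝ => s * t) atTop atTop)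
      exact this.congr fun t => by simp [Function.comp, neg_mul]
    exact Real.tendsto_exp_atBot.comp h1
  have ha : Tendsto (fun t : ℝ => t * Real.exp (-s * t)) atTop (nhds 0) := by
    have := tendsto_rpow_mul_exp_neg_mul_atTop_nhds_zero 1 s hs
    refine this.congr' ?_
    filter_upwards [eventually_gt_atTop (0:ℝ)] with t ht
    rw [Real.rpow_one, neg_mul]
  have h2 : Tendsto (fun t : ℝ => (t / s + 1 / s ^ 2) * Real.exp (-s * t)) atTop (nhds 0) := by
    have := ((ha.const_mul (1 / s)).add (hb.const_mul (1 / s ^ 2)))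
    rw [mul_zero, mul_zero, add_zero] at this
    exact this.congr (by intro t; ring)
  simpa using tendsto_const_nhds.sub h2

/-- If `‖e^{-st}e^{tB} - ũuᵀ‖ ≤ C₁e^{-C₂t}` for all `t ≥ 0` with `s, C₁, C₂ > 0`, then
`e^{-st} ∫₀^t (t-w) e^{wB} dw → ũuᵀ/s²` as `t → ∞` (in matrix norm). -/
theorem stmt14 {d : ℕ} (B : Matrix (Fin d) (Fin d) ℝ)
    (s C₁ C₂ : ℝ) (hs : 0 < s) (hC₁ : 0 < C₁) (hC₂ : 0 < C₂)
    (u utilde : Fin d → ℝ)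
    (hbound : ∀ t : ℝ, 0 ≤ t →
      ‖Real.exp (-s * t) • NormedSpace.exp (t • B) - Matrix.vecMulVec utilde u‖
        ≤ C₁ * Real.exp (-C₂ * t)) :
    Tendsto (fun t : ℝ =>
        Real.exp (-s * t) • ∫ w in (0:ℝ)..t, (t - w) • NormedSpace.exp (w • B))
      atTop (nhds ((1 / s ^ 2) • Matrix.vecMulVec utilde u)) := by
  set A := Matrix.vecMulVec utilde u with hA
  set E : ℝ → Matrix (Fin d) (Fin d) ℝ :=
    fun w => Real.exp (-s * w) • NormedSpace.exp (w • B) - A with hE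
  have hexpc : Continuous fun w : ℝ => NormedSpace.exp (w • B) :=
    by letI : NormedAlgebra ℚ (Matrix (Fin d) (Fin d) ℝ) := NormedAlgebra.restrictScalars ℚ ℝ _
       exact NormedSpace.exp_continuous.comp (continuous_id.smul continuous_const)
  have hEcont : Continuous E :=
    ((Real.continuous_exp.comp (by continuity)).smul hexpc).sub continuous_const
  set m : ℝ := min s C₂ with hm
  have hm0 : 0 < m := lt_min hs hC₂
  -- splitting the integral
  have split : ∀ t : ℝ,
      (∫ w in (0:ℝ)..t, (t - w) • NormedSpace.exp (w • B))
        = (∫ w in (0:ℝ)..t, (t - w) * Real.exp (s * w)) • A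
          + ∫ w in (0:ℝ)..t, ((t - w) * Real.exp (s * w)) • E w := by
    intro t
    rw [← intervalIntegral.integral_smul_const]
    rw [← intervalIntegral.integral_add
      (by apply Continuous.intervalIntegrable; continuity)
      (by apply Continuous.intervalIntegrable
          exact ((continuous_const.sub continuous_id).mul
            (Real.continuous_exp.comp (by continuity))).smul hEcont)]
    apply intervalIntegral.integral_congr
    intro w _
    have hexp1 : (t - w) * Real.exp (s * w) * Real.exp (-s * w) = t - w := by
      rw [mul_assoc, ← Real.exp_add]; ring_nf; simp
    simp only [hE, smul_sub, smul_smul, hexp1]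
    abel
  have heq : ∀ t : ℝ,
      Real.exp (-s * t) • ∫ w in (0:ℝ)..t, (t - w) • NormedSpace.exp (w • B)
        = (Real.exp (-s * t) * ∫ w in (0:ℝ)..t, (t - w) * Real.exp (s * w)) • A
          + Real.exp (-s * t) • ∫ w in (0:ℝ)..t, ((t - w) * Real.exp (s * w)) • E w := by
    intro t
    rw [split t, smul_add, smul_smul]
  -- second term goes to 0
  have herr : Tendsto
      (fun t : ℝ => Real.exp (-s * t) • ∫ w in (0:ℝ)..t, ((t - w) * Real.exp (s * w)) • E w)
      atTop (nhds 0) := by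
    rw [tendsto_zero_iff_norm_tendsto_zero]
    apply squeeze_zero' (Eventually.of_forall fun t => norm_nonneg _)
      (g := fun t : ℝ => C₁ * (t ^ 2 * Real.exp (-m * t)))
    · filter_upwards [eventually_ge_atTop (0:ℝ)] with t ht
      have hnorm : ‖∫ w in (0:ℝ)..t, ((t - w) * Real.exp (s * w)) • E w‖
          ≤ C₁ * t * Real.exp (s * t - m * t) * |t - 0| := by
        apply intervalIntegral.norm_integral_le_of_norm_le_const
        intro w hw
        rw [Set.uIoc_of_le ht] at hw
        obtain ⟨hw0, hwt⟩ := hw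
        have hw0' : (0:ℝ) ≤ w := le_of_lt hw0
        have hEw : ‖E w‖ ≤ C₁ * Real.exp (-C₂ * w) := hbound w hw0'
        rw [norm_smul, Real.norm_eq_abs]
        have htw : 0 ≤ t - w := by linarith
        have h1 : |(t - w) * Real.exp (s * w)| = (t - w) * Real.exp (s * w) := by
          rw [abs_of_nonneg]; positivity
        rw [h1]
        calc (t - w) * Real.exp (s * w) * ‖E w‖
            ≤ (t - w) * Real.exp (s * w) * (C₁ * Real.exp (-C₂ * w)) := by
              apply mul_le_mul_of_nonneg_left hEw; positivity
          _ = C₁ * ((t - w) * Real.exp (s * w - C₂ * w)) := by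
              have h2 : Real.exp (s * w) * Real.exp (-C₂ * w)
                  = Real.exp (s * w - C₂ * w) := by rw [← Real.exp_add]; ring_nf
              linear_combination (t - w) * C₁ * h2
          _ ≤ C₁ * (t * Real.exp (s * t - m * t)) := by
              apply mul_le_mul_of_nonneg_left _ (le_of_lt hC₁)
              apply mul_le_mul (by linarith) _ (Real.exp_nonneg _) ht
              apply Real.exp_le_exp.mpr
              have hms : m ≤ s := min_le_left _ _
              have hmc : m ≤ C₂ := min_le_right _ _
              nlinarith
          _ = C₁ * t * Real.exp (s * t - m * t) := by ring
      rw [norm_smul, Real.norm_eq_abs, Real.abs_exp]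
      calc Real.exp (-s * t) * ‖∫ w in (0:ℝ)..t, ((t - w) * Real.exp (s * w)) • E w‖
          ≤ Real.exp (-s * t) * (C₁ * t * Real.exp (s * t - m * t) * |t - 0|) := by
            apply mul_le_mul_of_nonneg_left hnorm (Real.exp_nonneg _)
        _ = C₁ * (t ^ 2 * Real.exp (-m * t)) := by
            rw [sub_zero, abs_of_nonneg ht]
            have h2 : Real.exp (-s * t) * Real.exp (s * t - m * t)
                = Real.exp (-m * t) := by rw [← Real.exp_add]; ring_nf
            linear_combination C₁ * t ^ 2 * h2
    · have hg : Tendsto (fun t : ℝ => t ^ 2 * Real.exp (-m * t)) atTop (nhds 0) := by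
        have := tendsto_rpow_mul_exp_neg_mul_atTop_nhds_zero 2 m hm0
        refine this.congr' ?_
        filter_upwards [eventually_gt_atTop (0:ℝ)] with t ht
        rw [show ((2:ℝ)) = ((2:ℕ):ℝ) by norm_num, Real.rpow_natCast]
      simpa using hg.const_mul C₁
  have hmain : Tendsto
      (fun t : ℝ => (Real.exp (-s * t) * ∫ w in (0:ℝ)..t, (t - w) * Real.exp (s * w)) • A)
      atTop (nhds ((1 / s ^ 2) • A)) := (aux_scalar14 s hs).smul_const A
  have := hmain.add herr
  rw [add_zero] at this
  exact Tendsto.congr (fun t => (heq t).symm) this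
end

section
/- Let s > 0, a ∈ ℝ with a < s/2 and a ≠ 0, and assume ‖e^{−st}e^{tB} − ũuᵀ‖ ≤ C₁e^{−C₂t} for all t ≥ 0 with C₁, C₂ > 0. Then e^{−st} ∫₀^t e^{2a(t−u)} (∫₀^u e^{wB} dw) du → ũuᵀ / ((s − 2a) s) as t → ∞. -/
open scoped Matrix.Norms.L2Operator
open Filter Matrix

lemma aux_int_exp {k : ℝ} (hk : k ≠ 0) (a b : ℝ) :
    ∫ x in a..b, Real.exp (k * x) = (Real.exp (k * b) - Real.exp (k * a)) / k := by
  rw [intervalIntegral.integral_comp_mul_left (fun x => Real.exp x) hk]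
  simp [smul_eq_mul]
  ring

/-- If `s > 0`, `a ≠ 0`, `2a < s` and `‖e^{-st}e^{tB} - ũuᵀ‖ ≤ C₁e^{-C₂t}` for all `t ≥ 0`, then
`e^{-st} ∫₀^t e^{2a(t-u)} (∫₀^u e^{wB} dw) du → ũuᵀ/((s-2a)s)` as `t → ∞`. -/
theorem stmt18 {d : ℕ} (B : Matrix (Fin d) (Fin d) ℝ)
    (s C₁ C₂ a : ℝ) (hs : 0 < s) (hC₁ : 0 < C₁) (hC₂ : 0 < C₂)
    (ha : a ≠ 0) (ha' : 2 * a < s)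
    (u utilde : Fin d → ℝ)
    (hbound : ∀ t : ℝ, 0 ≤ t →
      ‖Real.exp (-s * t) • NormedSpace.exp (t • B) - Matrix.vecMulVec utilde u‖
        ≤ C₁ * Real.exp (-C₂ * t)) :
    Tendsto (fun t : ℝ =>
        Real.exp (-s * t) •
          ∫ v in (0:ℝ)..t, Real.exp (2 * a * (t - v)) •
            ∫ w in (0:ℝ)..v, NormedSpace.exp (w • B))
      atTop (nhds ((1 / ((s - 2 * a) * s)) • Matrix.vecMulVec utilde u)) := by
  set M := Matrix.vecMulVec utilde u with hM
  set c : ℝ := min C₂ (min ((s - 2*a)/2) (s/2)) with hcdef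
  have hc : 0 < c := lt_min hC₂ (lt_min (by linarith) (by linarith))
  have hcC : c ≤ C₂ := min_le_left _ _
  have hsc : 0 < s - c := by
    have : c ≤ s/2 := le_trans (min_le_right _ _) (min_le_right _ _); linarith
  have hsca : 0 < s - c - 2*a := by
    have : c ≤ (s-2*a)/2 := le_trans (min_le_right _ _) (min_le_left _ _); linarith
  have hs2a : (0:ℝ) < s - 2*a := by linarith
  have h2a : (2:ℝ)*a ≠ 0 := mul_ne_zero two_ne_zero ha
  -- the remainder R
  set R : ℝ → Matrix (Fin d) (Fin d) ℝ :=
    fun w => NormedSpace.exp (w • B) - Real.exp (s*w) • M with hRdef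
  have hRcont : Continuous R := by
    apply Continuous.sub
    · exact (continuous_iff_continuousAt.2 fun x =>
        (NormedSpace.exp_analytic (𝕂 := ℝ) x).continuousAt).comp (continuous_id.smul continuous_const)
    · exact (Real.continuous_exp.comp (continuous_const.mul continuous_id)).smul continuous_const
  have hR : ∀ w : ℝ, 0 ≤ w → ‖R w‖ ≤ C₁ * Real.exp ((s - c) * w) := by
    intro w hw
    have h2 : R w = Real.exp (s*w) • (Real.exp (-s*w) • NormedSpace.exp (w • B) - M) := by
      rw [smul_sub, smul_smul, ← Real.exp_add]
      simp [hRdef]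
    calc ‖R w‖ = Real.exp (s*w) * ‖Real.exp (-s*w) • NormedSpace.exp (w • B) - M‖ := by
          rw [h2, norm_smul, Real.norm_eq_abs, abs_of_pos (Real.exp_pos _)]
      _ ≤ Real.exp (s*w) * (C₁ * Real.exp (-C₂*w)) :=
          mul_le_mul_of_nonneg_left (hbound w hw) (Real.exp_pos _).le
      _ ≤ C₁ * Real.exp ((s-c)*w) := by
          rw [mul_left_comm, ← Real.exp_add]
          gcongr
          nlinarith
  -- the primitive G of R
  set G : ℝ → Matrix (Fin d) (Fin d) ℝ := fun v => ∫ w in (0:ℝ)..v, R w with hGdef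
  have hGcont : Continuous G :=
    intervalIntegral.continuous_primitive (fun a b => hRcont.intervalIntegrable a b) 0
  set K : ℝ := C₁ / (s - c) with hKdef
  have hK : 0 < K := div_pos hC₁ hsc
  have hG : ∀ v : ℝ, 0 ≤ v → ‖G v‖ ≤ K * Real.exp ((s - c) * v) := by
    intro v hv
    have h1 : ‖G v‖ ≤ |∫ w in (0:ℝ)..v, C₁ * Real.exp ((s-c)*w)| := by
      apply intervalIntegral.norm_integral_le_abs_of_norm_le
      · filter_upwards [MeasureTheory.ae_restrict_mem measurableSet_uIoc] with w hw
        rw [Set.uIoc_of_le hv] at hw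
        exact hR w hw.1.le
      · exact ((continuous_const.mul (Real.continuous_exp.comp
          (continuous_const.mul continuous_id))).intervalIntegrable _ _)
    have h2 : (∫ w in (0:ℝ)..v, C₁ * Real.exp ((s-c)*w))
        = C₁ * ((Real.exp ((s-c)*v) - 1) / (s-c)) := by
      rw [intervalIntegral.integral_const_mul, aux_int_exp hsc.ne' 0 v]
      simp
    have hge : (1:ℝ) ≤ Real.exp ((s-c)*v) := Real.one_le_exp (by positivity)
    have h3 : (0:ℝ) ≤ C₁ * ((Real.exp ((s-c)*v) - 1) / (s-c)) :=
      mul_nonneg hC₁.le (div_nonneg (by linarith) hsc.le)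
    have h4 : C₁ * ((Real.exp ((s-c)*v) - 1) / (s-c)) = K * (Real.exp ((s-c)*v) - 1) := by
      rw [hKdef]; ring
    calc ‖G v‖ ≤ |∫ w in (0:ℝ)..v, C₁ * Real.exp ((s-c)*w)| := h1
      _ = K * (Real.exp ((s-c)*v) - 1) := by rw [h2, abs_of_nonneg h3, h4]
      _ ≤ K * Real.exp ((s-c)*v) := by nlinarith
  -- decomposition of inner integral
  have hF : ∀ v : ℝ, (∫ w in (0:ℝ)..v, NormedSpace.exp (w • B))
      = ((Real.exp (s*v) - 1)/s) • M + G v := by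
    intro v
    have h1 : ∀ w : ℝ, NormedSpace.exp (w • B) = Real.exp (s*w) • M + R w := by
      intro w; simp [hRdef]
    rw [intervalIntegral.integral_congr (g := fun w => Real.exp (s*w) • M + R w)
        (fun w _ => h1 w)]
    have i1 : IntervalIntegrable (fun w : ℝ => Real.exp (s*w) • M)
        MeasureTheory.volume 0 v := Continuous.intervalIntegrable (by fun_prop) 0 v
    rw [intervalIntegral.integral_add i1 (hRcont.intervalIntegrable _ _),
      intervalIntegral.integral_smul_const, aux_int_exp hs.ne' 0 v]
    simp [hGdef]
  -- main scalar part and error part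
  set mfun : ℝ → ℝ := fun t =>
    Real.exp (-s*t) * ∫ v in (0:ℝ)..t, Real.exp (2*a*(t-v)) * ((Real.exp (s*v)-1)/s)
    with hmdef
  set Efun : ℝ → Matrix (Fin d) (Fin d) ℝ :=
    fun t => ∫ v in (0:ℝ)..t, Real.exp (2*a*(t-v)) • G v with hEdef
  have key : ∀ t : ℝ,
      (Real.exp (-s*t) • ∫ v in (0:ℝ)..t, Real.exp (2*a*(t-v)) •
        ∫ w in (0:ℝ)..v, NormedSpace.exp (w • B))
      = mfun t • M + Real.exp (-s*t) • Efun t := by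
    intro t
    have h1 : ∀ v : ℝ, Real.exp (2*a*(t-v)) • (∫ w in (0:ℝ)..v, NormedSpace.exp (w • B))
        = (Real.exp (2*a*(t-v)) * ((Real.exp (s*v)-1)/s)) • M
          + Real.exp (2*a*(t-v)) • G v := by
      intro v; rw [hF v, smul_add, smul_smul]
    rw [intervalIntegral.integral_congr (fun v _ => h1 v)]
    have hco : Continuous fun v : ℝ => Real.exp (2*a*(t-v)) :=
      Real.continuous_exp.comp (continuous_const.mul (continuous_const.sub continuous_id))
    have hcψ : Continuous fun v : ℝ => (Real.exp (s*v)-1)/s :=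
      ((Real.continuous_exp.comp (continuous_const.mul continuous_id)).sub
        continuous_const).div_const s
    have i1 : IntervalIntegrable
        (fun v : ℝ => (Real.exp (2*a*(t-v)) * ((Real.exp (s*v)-1)/s)) • M)
        MeasureTheory.volume 0 t :=
      Continuous.intervalIntegrable (by fun_prop (disch := field_simp_discharge)) 0 t
    have i2 : IntervalIntegrable (fun v : ℝ => Real.exp (2*a*(t-v)) • G v)
        MeasureTheory.volume 0 t :=
      Continuous.intervalIntegrable (by fun_prop) 0 t
    rw [intervalIntegral.integral_add i1 i2,
      intervalIntegral.integral_smul_const, smul_add, smul_smul]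
  -- explicit formula for mfun
  have hmformula : ∀ t : ℝ, mfun t =
      (1 - (Real.exp ((s-2*a)*t))⁻¹)/(s*(s-2*a))
      + ((Real.exp (s*t))⁻¹ - (Real.exp ((s-2*a)*t))⁻¹)/(2*a*s) := by
    intro t
    have hpt : ∀ v : ℝ, Real.exp (2*a*(t-v)) * ((Real.exp (s*v)-1)/s)
        = (Real.exp (2*a*t)/s) * Real.exp ((s-2*a)*v)
          - (Real.exp (2*a*t)/s) * Real.exp (-(2*a)*v) := by
      intro v
      have e1 : Real.exp (2*a*(t-v)) = Real.exp (2*a*t) * Real.exp (-(2*a)*v) := by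
        rw [← Real.exp_add]; ring_nf
      have e2 : Real.exp ((s-2*a)*v) = Real.exp (s*v) * Real.exp (-(2*a)*v) := by
        rw [← Real.exp_add]; ring_nf
      rw [e1, e2]; field_simp
    rw [hmdef]
    simp only []
    have i1 : IntervalIntegrable
        (fun v : ℝ => Real.exp (2*a*t)/s * Real.exp ((s-2*a)*v))
        MeasureTheory.volume 0 t :=
      Continuous.intervalIntegrable (by fun_prop) 0 t
    have i2 : IntervalIntegrable
        (fun v : ℝ => Real.exp (2*a*t)/s * Real.exp (-(2*a)*v))
        MeasureTheory.volume 0 t :=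
      Continuous.intervalIntegrable (by fun_prop) 0 t
    rw [intervalIntegral.integral_congr (fun v _ => hpt v),
      intervalIntegral.integral_sub i1 i2,
      intervalIntegral.integral_const_mul, intervalIntegral.integral_const_mul,
      aux_int_exp hs2a.ne' 0 t, aux_int_exp (neg_ne_zero.mpr h2a) 0 t]
    have e3 : Real.exp ((s-2*a)*t) = Real.exp (s*t) / Real.exp (2*a*t) := by
      rw [← Real.exp_sub]; ring_nf
    have e4 : Real.exp (-(2*a)*t) = (Real.exp (2*a*t))⁻¹ := by
      rw [← Real.exp_neg]; ring_nf
    have e5 : Real.exp (-s*t) = (Real.exp (s*t))⁻¹ := by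
      rw [← Real.exp_neg]; ring_nf
    rw [e3, e4, e5]
    have hX := (Real.exp_pos (s*t)).ne'
    have hY := (Real.exp_pos (2*a*t)).ne'
    simp only [mul_zero, Real.exp_zero]
    field_simp
    ring
  -- limit of mfun
  have t1 : Tendsto (fun t : ℝ => (Real.exp ((s-2*a)*t))⁻¹) atTop (nhds 0) := by
    apply Tendsto.inv_tendsto_atTop
    exact Real.tendsto_exp_atTop.comp (tendsto_id.const_mul_atTop hs2a)
  have t2 : Tendsto (fun t : ℝ => (Real.exp (s*t))⁻¹) atTop (nhds 0) := by
    apply Tendsto.inv_tendsto_atTop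
    exact Real.tendsto_exp_atTop.comp (tendsto_id.const_mul_atTop hs)
  have hmt : Tendsto mfun atTop (nhds (1/((s-2*a)*s))) := by
    have h := (((tendsto_const_nhds (x := (1:ℝ))).sub t1).div_const (s*(s-2*a))).add
      ((t2.sub t1).div_const (2*a*s))
    have hval : (1 - (0:ℝ))/(s*(s-2*a)) + ((0:ℝ) - 0)/(2*a*s) = 1/((s-2*a)*s) := by
      rw [sub_zero, sub_zero, zero_div, add_zero, mul_comm]
    rw [hval] at h
    exact h.congr fun t => (hmformula t).symm
  -- error bound
  have herr : ∀ᶠ t in atTop, ‖Real.exp (-s*t) • Efun t‖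
      ≤ (K/(s-c-2*a)) * Real.exp (-c*t) := by
    filter_upwards [eventually_ge_atTop (0:ℝ)] with t ht
    have h1 : ‖Efun t‖ ≤ |∫ v in (0:ℝ)..t, Real.exp (2*a*(t-v)) * (K * Real.exp ((s-c)*v))| := by
      apply intervalIntegral.norm_integral_le_abs_of_norm_le
      · filter_upwards [MeasureTheory.ae_restrict_mem measurableSet_uIoc] with v hv
        rw [Set.uIoc_of_le ht] at hv
        rw [norm_smul, Real.norm_eq_abs, abs_of_pos (Real.exp_pos _)]
        exact mul_le_mul_of_nonneg_left (hG v hv.1.le) (Real.exp_pos _).le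
      · exact Continuous.intervalIntegrable (by fun_prop) _ _
    have hpt : ∀ v : ℝ, Real.exp (2*a*(t-v)) * (K * Real.exp ((s-c)*v))
        = (K * Real.exp (2*a*t)) * Real.exp ((s-c-2*a)*v) := by
      intro v
      have e1 : Real.exp (2*a*(t-v)) * Real.exp ((s-c)*v)
          = Real.exp (2*a*t) * Real.exp ((s-c-2*a)*v) := by
        rw [← Real.exp_add, ← Real.exp_add]; ring_nf
      calc Real.exp (2*a*(t-v)) * (K * Real.exp ((s-c)*v))
          = K * (Real.exp (2*a*(t-v)) * Real.exp ((s-c)*v)) := by ring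
        _ = (K * Real.exp (2*a*t)) * Real.exp ((s-c-2*a)*v) := by rw [e1]; ring
    have h2 : (∫ v in (0:ℝ)..t, Real.exp (2*a*(t-v)) * (K * Real.exp ((s-c)*v)))
        = (K * Real.exp (2*a*t)) * ((Real.exp ((s-c-2*a)*t) - 1)/(s-c-2*a)) := by
      rw [intervalIntegral.integral_congr (fun v _ => hpt v),
        intervalIntegral.integral_const_mul, aux_int_exp hsca.ne' 0 t]
      simp
    have hge : (1:ℝ) ≤ Real.exp ((s-c-2*a)*t) := Real.one_le_exp (by positivity)
    have h3 : (0:ℝ) ≤ (K * Real.exp (2*a*t)) * ((Real.exp ((s-c-2*a)*t) - 1)/(s-c-2*a)) :=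
      mul_nonneg (mul_nonneg hK.le (Real.exp_pos _).le)
        (div_nonneg (by linarith) hsca.le)
    have e6 : Real.exp (-s*t) * Real.exp (2*a*t) * Real.exp ((s-c-2*a)*t)
        = Real.exp (-c*t) := by
      rw [← Real.exp_add, ← Real.exp_add]; ring_nf
    have hEp := Real.exp_pos (-s*t)
    have hYp := Real.exp_pos (2*a*t)
    calc ‖Real.exp (-s*t) • Efun t‖ = Real.exp (-s*t) * ‖Efun t‖ := by
          rw [norm_smul, Real.norm_eq_abs, abs_of_pos hEp]
      _ ≤ Real.exp (-s*t) * ((K * Real.exp (2*a*t)) * ((Real.exp ((s-c-2*a)*t) - 1)/(s-c-2*a))) := by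
          apply mul_le_mul_of_nonneg_left _ hEp.le
          calc ‖Efun t‖ ≤ _ := h1
            _ = _ := by rw [h2, abs_of_nonneg h3]
      _ = (K/(s-c-2*a)) * (Real.exp (-s*t) * Real.exp (2*a*t) * (Real.exp ((s-c-2*a)*t) - 1)) := by
          ring
      _ ≤ (K/(s-c-2*a)) * (Real.exp (-s*t) * Real.exp (2*a*t) * Real.exp ((s-c-2*a)*t)) := by
          apply mul_le_mul_of_nonneg_left _ (div_nonneg hK.le hsca.le)
          apply mul_le_mul_of_nonneg_left _ (mul_nonneg hEp.le hYp.le)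
          linarith
      _ = (K/(s-c-2*a)) * Real.exp (-c*t) := by rw [e6]
  have hz : Tendsto (fun t : ℝ => (K/(s-c-2*a)) * Real.exp (-c*t)) atTop (nhds 0) := by
    have h1 : Tendsto (fun t : ℝ => Real.exp (-c*t)) atTop (nhds 0) := by
      have h0 : Tendsto (fun t : ℝ => c*t) atTop atTop := tendsto_id.const_mul_atTop hc
      have h2 : Tendsto (fun t : ℝ => Real.exp (-(c*t))) atTop (nhds 0) :=
        Real.tendsto_exp_atBot.comp (Filter.tendsto_neg_atTop_atBot.comp h0)
      simpa [neg_mul] using h2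
    simpa using h1.const_mul (K/(s-c-2*a))
  have herrz : Tendsto (fun t : ℝ => Real.exp (-s*t) • Efun t) atTop (nhds 0) :=
    squeeze_zero_norm' herr hz
  have hfinal := (hmt.smul_const M).add herrz
  rw [add_zero] at hfinal
  exact hfinal.congr fun t => (key t).symm
end
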